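/- Let V, W be finite-dimensional complex vector spaces, N ∈ End(W) with N^k = 0, and let g(z) = Σ_{i=0}^{k-1} g_i z^i be an invertible element of End(V)[z]/(z^k) with inverse g^{-1}(z) = Σ_{i=0}^{k-1} h_i z^i. For (Q,P) ∈ Hom(W,V) ⊕ Hom(V,W), define g·Q := Σ_i g_i Q N^i and g·P := Σ_i N^i P h_i. Then for every X ∈ End(W) commuting with N, one has tr((g·P)(g·Q) X) = tr(PQX). -/

import Mathlib

/-- invariance of the restricted moment map. If `N^k = 0`, `g(z) = Σ gᵢ zⁱ`
is invertible in `End(V)[z]/(z^k)` with inverse `Σ hᵢ zⁱ`, and the action is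
`g·Q = Σ gᵢ Q Nⁱ`, `g·P = Σ Nⁱ P hᵢ`, then for every `X ∈ End(W)` commuting with `N`,
`tr((g·P)(g·Q)X) = tr(PQX)`. -/
theorem stmt8
    (V W : Type*) [AddCommGroup V] [Module ℂ V] [FiniteDimensional ℂ V]
    [AddCommGroup W] [Module ℂ W] [FiniteDimensional ℂ W]
    (k : ℕ) (hk : 0 < k) (N : Module.End ℂ W) (hN : N ^ k = 0)
    (g h : ℕ → Module.End ℂ V)
    (hinv1 : ∀ l, l < k →
      ∑ i ∈ Finset.range (l + 1), h i * g (l - i) = if l = 0 then 1 else 0)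
    (hinv2 : ∀ l, l < k →
      ∑ i ∈ Finset.range (l + 1), g i * h (l - i) = if l = 0 then 1 else 0)
    (Q : W →ₗ[ℂ] V) (P : V →ₗ[ℂ] W)
    (X : Module.End ℂ W) (hX : X * N = N * X) :
    LinearMap.trace ℂ W
      ((∑ i ∈ Finset.range k, ((N ^ i : Module.End ℂ W) : W →ₗ[ℂ] W) ∘ₗ P ∘ₗ (h i)) ∘ₗ
        (∑ i ∈ Finset.range k, (g i) ∘ₗ Q ∘ₗ ((N ^ i : Module.End ℂ W) : W →ₗ[ℂ] W)) ∘ₗ X)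
      = LinearMap.trace ℂ W (P ∘ₗ Q ∘ₗ X) := by
  set f : ℕ → ℕ → ℂ := fun i j =>
    LinearMap.trace ℂ W (P ∘ₗ ((h i * g j : Module.End ℂ V) : V →ₗ[ℂ] V) ∘ₗ Q ∘ₗ
      ((N ^ (i + j) * X : Module.End ℂ W) : W →ₗ[ℂ] W)) with hf
  have hcomm : ∀ i : ℕ, X * N ^ i = N ^ i * X := fun i =>
    ((Commute.pow_right (show Commute X N from hX) i)).eq
  -- Step 1+2: expand and per-term rewrite
  have step1 : LinearMap.trace ℂ W
      ((∑ i ∈ Finset.range k, ((N ^ i : Module.End ℂ W) : W →ₗ[ℂ] W) ∘ₗ P ∘ₗ (h i)) ∘ₗ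
        (∑ i ∈ Finset.range k, (g i) ∘ₗ Q ∘ₗ ((N ^ i : Module.End ℂ W) : W →ₗ[ℂ] W)) ∘ₗ X)
      = ∑ i ∈ Finset.range k, ∑ j ∈ Finset.range k, f i j := by
    have expand : ((∑ i ∈ Finset.range k, ((N ^ i : Module.End ℂ W) : W →ₗ[ℂ] W) ∘ₗ P ∘ₗ (h i)) ∘ₗ
        (∑ i ∈ Finset.range k, (g i) ∘ₗ Q ∘ₗ ((N ^ i : Module.End ℂ W) : W →ₗ[ℂ] W)) ∘ₗ X)
        = ∑ i ∈ Finset.range k, ∑ j ∈ Finset.range k,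
          (((N ^ i : Module.End ℂ W) : W →ₗ[ℂ] W) ∘ₗ (P ∘ₗ h i) ∘ₗ
            ((g j ∘ₗ Q ∘ₗ ((N ^ j : Module.End ℂ W) : W →ₗ[ℂ] W)) ∘ₗ X)) := by
      ext w
      simp [LinearMap.sum_apply, LinearMap.comp_apply, map_sum]
      exact Finset.sum_comm
    rw [expand, map_sum]
    refine Finset.sum_congr rfl fun i _ => ?_
    rw [map_sum]
    refine Finset.sum_congr rfl fun j _ => ?_
    have hc : (N : Module.End ℂ W) ^ j * X * N ^ i = N ^ (i + j) * X := by
      rw [mul_assoc, hcomm i, ← mul_assoc, ← pow_add, Nat.add_comm j i]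
    calc LinearMap.trace ℂ W (((N ^ i : Module.End ℂ W) : W →ₗ[ℂ] W) ∘ₗ (P ∘ₗ h i) ∘ₗ
            ((g j ∘ₗ Q ∘ₗ ((N ^ j : Module.End ℂ W) : W →ₗ[ℂ] W)) ∘ₗ X))
        = LinearMap.trace ℂ W (((P ∘ₗ h i) ∘ₗ
            ((g j ∘ₗ Q ∘ₗ ((N ^ j : Module.End ℂ W) : W →ₗ[ℂ] W)) ∘ₗ X)) ∘ₗ
            ((N ^ i : Module.End ℂ W) : W →ₗ[ℂ] W)) := by
          rw [LinearMap.trace_comp_comm']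
      _ = f i j := by
          rw [hf]
          congr 1
          ext w
          simp only [LinearMap.comp_apply, Module.End.mul_apply]
          rw [← Module.End.mul_apply (N ^ (i+j)) X, ← hc]
          simp [Module.End.mul_apply]
  rw [step1]
  have hvanish : ∀ i j, k ≤ i + j → f i j = 0 := by
    intro i j hij
    rw [hf]
    simp [pow_eq_zero_of_le hij hN]
  -- Step 3: truncate the inner sums and flip
  have step3 : ∀ i ∈ Finset.range k,
      ∑ j ∈ Finset.range k, f i j = ∑ j ∈ Finset.range (k - i), f i j := by
    intro i hi
    refine (Finset.sum_subset (Finset.range_subset_range.2 (Nat.sub_le k i)) ?_).symm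
    intro j _ hj
    exact hvanish i j (by simp only [Finset.mem_range, not_lt] at hj ⊢; omega)
  rw [Finset.sum_congr rfl step3, ← Finset.sum_range_diag_flip k (fun i j => f i j)]
  -- Step 4: evaluate each diagonal sum
  have step4 : ∀ m ∈ Finset.range k,
      ∑ i ∈ Finset.range (m + 1), f i (m - i)
        = if m = 0 then LinearMap.trace ℂ W (P ∘ₗ Q ∘ₗ X) else 0 := by
    intro m hm
    rw [Finset.mem_range] at hm
    have : ∀ i ∈ Finset.range (m + 1), f i (m - i)
        = LinearMap.trace ℂ W (P ∘ₗ ((h i * g (m - i) : Module.End ℂ V) : V →ₗ[ℂ] V) ∘ₗ Q ∘ₗ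
            ((N ^ m * X : Module.End ℂ W) : W →ₗ[ℂ] W)) := by
      intro i hi
      rw [Finset.mem_range, Nat.lt_succ_iff] at hi
      show LinearMap.trace ℂ W (P ∘ₗ ((h i * g (m - i) : Module.End ℂ V) : V →ₗ[ℂ] V) ∘ₗ Q ∘ₗ
          ((N ^ (i + (m - i)) * X : Module.End ℂ W) : W →ₗ[ℂ] W)) = _
      rw [Nat.add_sub_cancel' hi]
    rw [Finset.sum_congr rfl this]
    have key : ∑ i ∈ Finset.range (m + 1),
        (P ∘ₗ ((h i * g (m - i) : Module.End ℂ V) : V →ₗ[ℂ] V) ∘ₗ Q ∘ₗ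
          ((N ^ m * X : Module.End ℂ W) : W →ₗ[ℂ] W))
        = P ∘ₗ ((∑ i ∈ Finset.range (m + 1), h i * g (m - i) : Module.End ℂ V) : V →ₗ[ℂ] V) ∘ₗ
            Q ∘ₗ ((N ^ m * X : Module.End ℂ W) : W →ₗ[ℂ] W) := by
      ext w
      simp [LinearMap.sum_apply, map_sum]
    rw [← map_sum, key, hinv1 m hm]
    by_cases hm0 : m = 0
    · subst hm0
      rw [if_pos rfl]
      have h1 : (P ∘ₗ ((1 : Module.End ℂ V) : V →ₗ[ℂ] V) ∘ₗ Q ∘ₗ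
          ((N ^ 0 * X : Module.End ℂ W) : W →ₗ[ℂ] W)) = P ∘ₗ Q ∘ₗ X := by
        ext w; simp
      rw [h1]
      simp
    · simp [hm0]
  rw [Finset.sum_congr rfl step4, Finset.sum_ite_eq' (Finset.range k) 0]
  simp [Finset.mem_range, hk]
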